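/- Let G be a cyclic group of prime order p with generator g, and let H be a module over the group ring ℤ[G] that is ℤ[G]-linearly isomorphic to (ℤ[G])^ν × ℤ^μ, where G acts trivially on ℤ^μ. Suppose H carries a G-invariant symmetric bilinear form B : H × H → ℤ (B(g·x, g·y) = B(x,y)) that is unimodular, i.e. the map H → Hom_ℤ(H, ℤ), x ↦ B(x, −), is bijective. Let H^G := {x ∈ H : g·x = x}. Then: (i) the kernel of the norm endomorphism N(x) := Σ_{i=0}^{p−1} g^i·x equals the orthogonal complement {x ∈ H : B(x, y) = 0 for all y ∈ H^G}; and (ii) the dual lattice (H^G)^∨ := {y ∈ H^G ⊗ ℚ : B_ℚ(y, x) ∈ ℤ for all x ∈ H^G} (where B_ℚ is the ℚ-bilinear extension of B) satisfies p·(H^G)^∨ ⊆ H^G, and the quotient group (H^G)^∨ / H^G is isomorphic to (ℤ/pℤ)^ν. -/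

import Mathlib

open scoped BigOperators TensorProduct

section FixedLattice

variable {G : Type*} [Group G] {H : Type*} [AddCommGroup H] [DistribMulAction G H]

/-- The fixed submodule `H^G = {x : g • x = x}` (for a fixed group element `g`). -/
def fixedSubmodule (g : G) : Submodule ℤ H where
  carrier := {x | g • x = x}
  zero_mem' := smul_zero g
  add_mem' := by
    intro a b ha hb
    show g • (a + b) = a + b
    rw [smul_add, ha, hb]
  smul_mem' := by
    intro n x hx
    show g • (n • x) = n • x
    have h := map_zsmul (DistribMulAction.toAddMonoidHom H g) n x
    simp only [DistribMulAction.toAddMonoidHom_apply] at h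
    rw [h, hx]

variable (B : H →ₗ[ℤ] H →ₗ[ℤ] ℤ)

/-- For `x ∈ H^G`, the `ℤ`-linear functional on `H^G ⊗ ℚ` extending `z ↦ B(z, x)`;
this realizes the `ℚ`-bilinear extension `B_ℚ(·, x)` of `B` on `H^G ⊗ ℚ`. -/
noncomputable def pairQ (g : G) (x : fixedSubmodule (H := H) g) :
    ((fixedSubmodule (H := H) g) ⊗[ℤ] ℚ) →ₗ[ℤ] ℚ :=
  TensorProduct.lift
    { toFun := fun z => (B z.1 x.1) • (LinearMap.id : ℚ →ₗ[ℤ] ℚ)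
      map_add' := by
        intro z z'
        simp only [Submodule.coe_add, map_add, LinearMap.add_apply, add_smul]
      map_smul' := by
        intro n z
        simp only [Submodule.coe_smul, map_smul, LinearMap.smul_apply, RingHom.id_apply,
          smul_assoc] }

/-- The dual lattice `(H^G)^∨ = {y ∈ H^G ⊗ ℚ : B_ℚ(y, x) ∈ ℤ for all x ∈ H^G}`. -/
noncomputable def dualFixed (g : G) :
    AddSubgroup ((fixedSubmodule (H := H) g) ⊗[ℤ] ℚ) where
  carrier := {y | ∀ x : fixedSubmodule (H := H) g, ∃ m : ℤ, pairQ B g x y = m}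
  zero_mem' := by
    intro x
    exact ⟨0, by simp⟩
  add_mem' := by
    intro a b ha hb x
    obtain ⟨m₁, h₁⟩ := ha x
    obtain ⟨m₂, h₂⟩ := hb x
    exact ⟨m₁ + m₂, by rw [map_add, h₁, h₂]; push_cast; ring⟩
  neg_mem' := by
    intro a ha x
    obtain ⟨m, h⟩ := ha x
    exact ⟨-m, by rw [map_neg, h]; push_cast; ring⟩

/-- The canonical embedding `H^G → H^G ⊗ ℚ`, `x ↦ x ⊗ 1`. -/
noncomputable def latticeInQ (g : G) :
    (fixedSubmodule (H := H) g) →+ ((fixedSubmodule (H := H) g) ⊗[ℤ] ℚ) :=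
  AddMonoidHom.mk' (fun z => z ⊗ₜ[ℤ] (1 : ℚ)) (fun a b => TensorProduct.add_tmul a b 1)

end FixedLattice

namespace AuxDisc
set_option linter.unusedSectionVars false
variable {G : Type*} [Group G] [Fintype G]

noncomputable def Nbar (G : Type*) [Group G] [Fintype G] : MonoidAlgebra ℤ G :=
  ∑ x : G, MonoidAlgebra.single x 1

noncomputable def eps (G : Type*) [Group G] : MonoidAlgebra ℤ G →ₐ[ℤ] ℤ :=
  MonoidAlgebra.lift ℤ ℤ G 1

@[simp] lemma eps_single (x : G) (c : ℤ) : eps G (MonoidAlgebra.single x c) = c := by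
  simp [eps, MonoidAlgebra.lift_single]

lemma Nbar_apply (x : G) : (Nbar G).coeff x = 1 := by
  classical
  simp only [Nbar]
  rw [MonoidAlgebra.coeff_sum, Finsupp.finset_sum_apply]
  simp only [MonoidAlgebra.coeff_single]
  rw [Finset.sum_eq_single x (fun b _ hb => Finsupp.single_eq_of_ne' hb) (by simp)]
  simp

lemma eps_Nbar : eps G (Nbar G) = Fintype.card G := by
  simp [Nbar]

lemma mul_Nbar (h : G) : MonoidAlgebra.single h (1:ℤ) * Nbar G = Nbar G := by
  classical
  ext x
  rw [MonoidAlgebra.coeff_single_mul_apply, Nbar_apply, Nbar_apply, one_mul]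

lemma Nbar_mul (a : MonoidAlgebra ℤ G) : Nbar G * a = eps G a • Nbar G := by
  classical
  induction a using MonoidAlgebra.induction_linear with
  | zero => simp
  | add f g hf hg => rw [mul_add, hf, hg, map_add, add_smul]
  | single x c =>
      show Nbar G * MonoidAlgebra.single x c = eps G (MonoidAlgebra.single x c) • Nbar G
      have h2 : MonoidAlgebra.single x c = c • MonoidAlgebra.single x (1:ℤ) := by
        rw [MonoidAlgebra.smul_single, smul_eq_mul, mul_one]
      rw [eps_single, h2, mul_smul_comm]
      congr 1
      ext y
      rw [MonoidAlgebra.coeff_mul_single_apply, Nbar_apply, Nbar_apply, mul_one]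

lemma fixed_char (g : G) (hgen : ∀ x : G, x ∈ Subgroup.zpowers g) (a : MonoidAlgebra ℤ G)
    (ha : MonoidAlgebra.single g (1:ℤ) * a = a) : a = (a.coeff 1) • Nbar G := by
  classical
  have hpow : ∀ k : ℕ, MonoidAlgebra.single (g ^ k) (1:ℤ) * a = a := by
    intro k
    induction k with
    | zero => simp [MonoidAlgebra.one_def.symm]
    | succ n ih =>
        have : MonoidAlgebra.single (g ^ (n+1)) (1:ℤ)
            = MonoidAlgebra.single g (1:ℤ) * MonoidAlgebra.single (g ^ n) (1:ℤ) := by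
          rw [MonoidAlgebra.single_mul_single, one_mul, pow_succ']
        rw [this, mul_assoc, ih, ha]
  have hconst : ∀ x : G, a.coeff x = a.coeff 1 := by
    intro x
    obtain ⟨k, hk⟩ := mem_powers_iff_mem_zpowers.mpr (hgen x)
    have h3 : (MonoidAlgebra.single (g ^ k) (1:ℤ) * a).coeff (g ^ k) = a.coeff (g ^ k) := by rw [hpow k]
    rw [MonoidAlgebra.coeff_single_mul_apply, inv_mul_cancel, one_mul] at h3
    rw [← hk]
    exact h3.symm
  ext x
  rw [MonoidAlgebra.coeff_smul_apply, Nbar_apply, smul_eq_mul, mul_one, hconst x]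

lemma sum_pows (g : G) (hgen : ∀ x : G, x ∈ Subgroup.zpowers g)
    (hord : orderOf g = Fintype.card G) :
    ∑ i ∈ Finset.range (Fintype.card G), MonoidAlgebra.single (g ^ i) (1:ℤ) = Nbar G := by
  classical
  rw [Nbar, ← hord]
  refine Finset.sum_bij (fun i _ => g ^ i) (fun i _ => Finset.mem_univ _) ?_ ?_ (fun i _ => rfl)
  · intro i hi j hj hij
    exact pow_injOn_Iio_orderOf (Finset.mem_range.mp hi) (Finset.mem_range.mp hj) hij
  · intro x _
    obtain ⟨k, hk⟩ := mem_powers_iff_mem_zpowers.mpr (hgen x)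
    refine ⟨k % orderOf g, Finset.mem_range.mpr (Nat.mod_lt _ (orderOf_pos g)), ?_⟩
    show g ^ (k % orderOf g) = x
    rw [pow_mod_orderOf]
    exact hk

end AuxDisc


set_option maxHeartbeats 1000000 in
/-- Let `G` be cyclic of prime order `p` with generator `g`, and `H` a `ℤ[G]`-module
isomorphic to `(ℤ[G])^ν × ℤ^μ` with trivial action on `ℤ^μ`.  Suppose `H` carries a
`G`-invariant symmetric unimodular bilinear form `B`.  Then (i) the kernel of the norm
endomorphism equals the orthogonal complement of `H^G`, and (ii) the dual lattice
`(H^G)^∨ ⊆ H^G ⊗ ℚ` satisfies `p·(H^G)^∨ ⊆ H^G` and `(H^G)^∨ / H^G ≅ (ℤ/pℤ)^ν`. -/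
theorem ker_norm_eq_orthogonal_and_discriminant_of_unimodular
    (p : ℕ) (hp : p.Prime) {G : Type*} [Group G] (hcard : Nat.card G = p)
    (g : G) (hgen : ∀ x : G, x ∈ Subgroup.zpowers g)
    {H : Type*} [AddCommGroup H] [DistribMulAction G H]
    (ν μ : ℕ)
    (e : H ≃+ (Fin ν → MonoidAlgebra ℤ G) × (Fin μ → ℤ))
    (he : ∀ (a : G) (x : H),
      e (a • x) = ((fun n => MonoidAlgebra.of ℤ G a * (e x).1 n), (e x).2))
    (B : H →ₗ[ℤ] H →ₗ[ℤ] ℤ)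
    (hsymm : ∀ x y : H, B x y = B y x)
    (hinv : ∀ x y : H, B (g • x) (g • y) = B x y)
    (hunimod : Function.Bijective fun x : H => (B x : H →ₗ[ℤ] ℤ)) :
    (∀ x : H, (∑ i ∈ Finset.range p, g ^ i • x) = 0 ↔
      ∀ y : H, g • y = y → B x y = 0) ∧
    (∀ y ∈ dualFixed B g, p • y ∈ (latticeInQ (H := H) g).range) ∧
    Nonempty ((dualFixed B g ⧸
        ((latticeInQ (H := H) g).range.addSubgroupOf (dualFixed B g))) ≃+
      (Fin ν → ZMod p)) := by
    classical
  have hp0 : (p:ℤ) ≠ 0 := by exact_mod_cast hp.ne_zero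
  have hfin : Finite G := Nat.finite_of_card_ne_zero (by rw [hcard]; exact hp.ne_zero)
  have : Fintype G := Fintype.ofFinite G
  have hcardF : Fintype.card G = p := by rw [← Nat.card_eq_fintype_card, hcard]
  have hgp : g ^ p = 1 := by rw [← hcard]; exact pow_card_eq_one'
  -- powers of g fix fixed vectors
  have hfixpow : ∀ (i : ℕ) (y : H), g • y = y → g ^ i • y = y := by
    intro i y hy
    induction i with
    | zero => simp
    | succ n ih => rw [pow_succ, mul_smul, hy, ih]
  -- invariance under powers
  have hpowB : ∀ (i : ℕ) (x y : H), B (g ^ i • x) (g ^ i • y) = B x y := by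
    intro i x y
    induction i with
    | zero => simp
    | succ n ih => rw [pow_succ', mul_smul, mul_smul, hinv, ih]
  have hfixB : ∀ (i : ℕ) (x y : H), g • y = y → B (g ^ i • x) y = B x y := by
    intro i x y hy
    conv_lhs => rw [← hfixpow i y hy]
    exact hpowB i x y
  -- the norm map lands in the fixed module
  have hNfix : ∀ x : H, g • (∑ i ∈ Finset.range p, g ^ i • x) = ∑ i ∈ Finset.range p, g ^ i • x := by
    intro x
    rw [Finset.smul_sum]
    have h1 : ∀ i : ℕ, g • (g ^ i • x) = g ^ (i+1) • x := by
      intro i; rw [← mul_smul, ← pow_succ']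
    simp only [h1]
    have h3 := Finset.sum_range_succ' (fun i => g ^ i • x) p
    have h4 := Finset.sum_range_succ (fun i => g ^ i • x) p
    have h5 := h3.symm.trans h4
    have h2 : ∑ i ∈ Finset.range p, g ^ (i+1) • x
        = (∑ i ∈ Finset.range p, g ^ i • x) + g ^ p • x - g ^ 0 • x :=
      eq_sub_of_add_eq h5
    rw [h2, hgp, pow_zero]
    abel
  have hBNl : ∀ x y : H, g • y = y → B (∑ i ∈ Finset.range p, g ^ i • x) y = p * B x y := by
    intro x y hy
    rw [map_sum, LinearMap.coe_sum, Finset.sum_apply]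
    rw [Finset.sum_congr rfl (fun i _ => hfixB i x y hy)]
    simp [mul_comm]
  have hBNr : ∀ x y : H, g • x = x → B x (∑ i ∈ Finset.range p, g ^ i • y) = p * B x y := by
    intro x y hx
    rw [hsymm, hBNl y x hx, hsymm y x]
  have part1 : ∀ x : H, (∑ i ∈ Finset.range p, g ^ i • x) = 0 ↔
      ∀ y : H, g • y = y → B x y = 0 := by
    intro x
    constructor
    · intro hN y hy
      have h0 : B (∑ i ∈ Finset.range p, g ^ i • x) y = 0 := by rw [hN]; simp
      rw [hBNl x y hy] at h0
      exact (mul_eq_zero.mp h0).resolve_left hp0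
    · intro hperp
      have hkey : ∀ z : H, B (∑ i ∈ Finset.range p, g ^ i • x) z = 0 := by
        intro z
        have h1 : B (∑ i ∈ Finset.range p, g ^ i • x) (∑ i ∈ Finset.range p, g ^ i • z)
            = p * B (∑ i ∈ Finset.range p, g ^ i • x) z := hBNr _ z (hNfix x)
        have h2 : B (∑ i ∈ Finset.range p, g ^ i • x) (∑ i ∈ Finset.range p, g ^ i • z)
            = 0 := by
          rw [hsymm, hBNr _ x (hNfix z), hsymm _ x, hperp _ (hNfix z), mul_zero]
        rw [h2] at h1
        exact ((mul_eq_zero.mp h1.symm).resolve_left hp0)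
      have : B (∑ i ∈ Finset.range p, g ^ i • x) = B 0 := by
        apply LinearMap.ext; intro z; rw [hkey z, map_zero]; rfl
      exact hunimod.injective this

  -- torsion-freeness of H
  have hTf : ∀ (n : ℤ), n ≠ 0 → ∀ x : H, n • x = 0 → x = 0 := by
    intro n hn x hx
    have h1 : n • e x = 0 := by rw [← map_zsmul, hx, map_zero]
    have h2 : e x = 0 := by
      apply Prod.ext
      · funext j
        have h3 : n • ((e x).1 j) = 0 := by
          have := congrArg (fun v => v.1 j) h1; simpa using this
        apply MonoidAlgebra.ext; apply Finsupp.ext; intro y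
        have h5 : (n • ((e x).1 j)).coeff y = (0 : MonoidAlgebra ℤ G).coeff y := by rw [h3]
        have h4 : n * ((e x).1 j).coeff y = 0 := by
          rw [← smul_eq_mul, ← MonoidAlgebra.coeff_smul_apply, h3]
          rfl
        have := (mul_eq_zero.mp h4).resolve_left hn
        simpa using this
      · funext k
        have h3 : n • ((e x).2 k) = 0 := by
          have := congrArg (fun v => v.2 k) h1; simpa using this
        have := (mul_eq_zero.mp (by simpa [smul_eq_mul] using h3)).resolve_left hn
        simpa using this
    have := congrArg e.symm h2
    simpa using this
  -- pairQ evaluation on pure tensors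
  have hpair_tmul : ∀ (x v : fixedSubmodule (H := H) g) (q : ℚ),
      pairQ B g x (v ⊗ₜ[ℤ] q) = (B v.1 x.1 : ℚ) * q := by
    intro x v q
    show (B v.1 x.1) • (LinearMap.id : ℚ →ₗ[ℤ] ℚ) q = (B v.1 x.1 : ℚ) * q
    simp [zsmul_eq_mul]
  have hpair_addx : ∀ (x x' : fixedSubmodule (H := H) g) (u : (fixedSubmodule (H := H) g) ⊗[ℤ] ℚ),
      pairQ B g (x + x') u = pairQ B g x u + pairQ B g x' u := by
    intro x x' u
    induction u using TensorProduct.induction_on with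
    | zero => simp
    | tmul v q =>
        rw [hpair_tmul, hpair_tmul, hpair_tmul]
        have : B v.1 (x + x').1 = B v.1 x.1 + B v.1 x'.1 := by
          rw [Submodule.coe_add, map_add]
        rw [this]
        push_cast
        ring
    | add u1 u2 h1 h2 => rw [map_add, map_add, map_add, h1, h2]; ring
  -- common denominators
  have hdenom : ∀ u : (fixedSubmodule (H := H) g) ⊗[ℤ] ℚ,
      ∃ (w : fixedSubmodule (H := H) g) (m : ℕ), 0 < m ∧ (m : ℤ) • u = w ⊗ₜ[ℤ] (1:ℚ) := by
    intro u
    induction u using TensorProduct.induction_on with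
    | zero => exact ⟨0, 1, one_pos, by simp⟩
    | tmul v q =>
        refine ⟨q.num • v, q.den, q.pos, ?_⟩
        have hden : ((q.den : ℤ) : ℚ) * q = (q.num : ℚ) := by
          have h5 : (q.num : ℚ) = q * q.den := by
            rw [← div_eq_iff (by exact_mod_cast q.den_nz)]
            exact Rat.num_div_den q
          rw [h5]; push_cast; ring
        calc ((q.den : ℕ) : ℤ) • (v ⊗ₜ[ℤ] q)
            = v ⊗ₜ[ℤ] (((q.den:ℕ):ℤ) • q) :=
              ((TensorProduct.mk ℤ (fixedSubmodule (H := H) g) ℚ v).map_smul _ q).symm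
          _ = v ⊗ₜ[ℤ] ((q.num : ℤ) • (1:ℚ)) := by
              congr 1
              rw [zsmul_eq_mul, zsmul_eq_mul, mul_one]
              exact_mod_cast hden
          _ = (q.num • v) ⊗ₜ[ℤ] (1:ℚ) := by
              have h9 := (TensorProduct.mk ℤ (fixedSubmodule (H := H) g) ℚ v).map_smul q.num (1:ℚ)
              exact h9.trans (TensorProduct.smul_tmul' _ _ _)
    | add u1 u2 h1 h2 =>
        obtain ⟨w1, m1, hm1, hw1⟩ := h1
        obtain ⟨w2, m2, hm2, hw2⟩ := h2
        refine ⟨(m2:ℤ) • w1 + (m1:ℤ) • w2, m1 * m2, Nat.mul_pos hm1 hm2, ?_⟩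
        rw [TensorProduct.add_tmul, ← TensorProduct.smul_tmul', ← TensorProduct.smul_tmul',
          ← hw1, ← hw2, smul_add]
        push_cast
        rw [smul_smul, smul_smul, mul_comm (m2:ℤ) (m1:ℤ)]
  -- dividing by a nonzero integer in L ⊗ ℚ
  have hdiv : ∀ (m : ℤ), m ≠ 0 →
      ∀ u v : (fixedSubmodule (H := H) g) ⊗[ℤ] ℚ, m • u = m • v → u = v := by
    intro m hm u v huv
    set τ := LinearMap.lTensor (R := ℤ) (fixedSubmodule (H := H) g)
      ((m:ℚ)⁻¹ • (LinearMap.id : ℚ →ₗ[ℤ] ℚ)) with hτ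
    have hmap : ∀ w : (fixedSubmodule (H := H) g) ⊗[ℤ] ℚ, m • τ w = w := by
      intro w
      induction w using TensorProduct.induction_on with
      | zero => simp
      | tmul a q =>
          rw [hτ, LinearMap.lTensor_tmul]
          rw [← TensorProduct.tmul_smul]
          congr 1
          show m • ((m:ℚ)⁻¹ • (LinearMap.id : ℚ →ₗ[ℤ] ℚ)) q = q
          simp only [LinearMap.smul_apply, LinearMap.id_coe, id_eq, zsmul_eq_mul, smul_eq_mul]
          field_simp
      | add u1 u2 h1 h2 => rw [map_add, smul_add, h1, h2]
    have h2 : τ (m • u) = τ (m • v) := congrArg τ huv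
    rw [map_zsmul, map_zsmul] at h2
    rw [← hmap u, ← hmap v, h2]
  -- nondegeneracy on the fixed module
  have horth : ∀ w : H, g • w = w → (∀ x : H, g • x = x → B w x = 0) → w = 0 := by
    intro w hw hperp
    have hN := (part1 w).mpr hperp
    have hpw : (∑ i ∈ Finset.range p, g ^ i • w) = (p:ℤ) • w := by
      rw [Finset.sum_congr rfl (fun i _ => hfixpow i w hw)]
      simp
    rw [hpw] at hN
    exact hTf p hp0 w hN
  -- injectivity of the embedding into L ⊗ ℚ
  have hinj1 : ∀ v w : fixedSubmodule (H := H) g, v ⊗ₜ[ℤ] (1:ℚ) = w ⊗ₜ[ℤ] (1:ℚ) → v = w := by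
    intro v w hvw
    have hz : (v - w) ⊗ₜ[ℤ] (1:ℚ) = 0 := by rw [TensorProduct.sub_tmul, hvw, sub_self]
    have hb : ∀ x : fixedSubmodule (H := H) g, B (v - w).1 x.1 = 0 := by
      intro x
      have h6 := congrArg (pairQ B g x) hz
      rw [hpair_tmul, map_zero, mul_one] at h6
      exact_mod_cast h6
    have h7 : (v:H) - w = 0 := by
      have h8 : ((v - w : fixedSubmodule (H := H) g) : H) = (v:H) - w := rfl
      rw [← h8]
      exact horth _ (v - w).2 (fun x hx => hb ⟨x, hx⟩)
    exact Subtype.ext (sub_eq_zero.mp h7)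

  -- model computations
  have hord : orderOf g = Fintype.card G := by
    rw [orderOf_eq_card_of_forall_mem_zpowers hgen, Nat.card_eq_fintype_card]
  have hsum_of : ∑ i ∈ Finset.range p, MonoidAlgebra.of ℤ G (g ^ i) = AuxDisc.Nbar G := by
    simp only [MonoidAlgebra.of_apply]
    rw [← hcardF]
    exact AuxDisc.sum_pows g hgen hord
  have hNe : ∀ z : H, e (∑ i ∈ Finset.range p, g ^ i • z)
      = (fun j => AuxDisc.eps G ((e z).1 j) • AuxDisc.Nbar G, p • (e z).2) := by
    intro z
    have h1 : e (∑ i ∈ Finset.range p, g ^ i • z) = ∑ i ∈ Finset.range p, e (g ^ i • z) :=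
      map_sum e _ _
    rw [h1, Finset.sum_congr rfl (fun i _ => he (g ^ i) z)]
    apply Prod.ext
    · rw [Prod.fst_sum]
      funext j
      rw [Finset.sum_apply]
      show ∑ i ∈ Finset.range p, MonoidAlgebra.of ℤ G (g ^ i) * (e z).1 j = _
      rw [← Finset.sum_mul, hsum_of, AuxDisc.Nbar_mul]
    · rw [Prod.snd_sum]
      simp
  have hLchar : ∀ w : H, g • w = w → ∀ j, (e w).1 j = (((e w).1 j).coeff 1) • AuxDisc.Nbar G := by
    intro w hw j
    apply AuxDisc.fixed_char g hgen
    have h1 : (fun n => MonoidAlgebra.of ℤ G g * (e w).1 n, (e w).2) = e w := by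
      rw [← he g w, hw]
    have h2 := congrArg (fun v => v.1 j) h1
    simpa [MonoidAlgebra.of_apply] using h2
  have hLmem : ∀ (c : Fin ν → ℤ) (b : Fin μ → ℤ),
      g • (e.symm (fun j => c j • AuxDisc.Nbar G, b)) = e.symm (fun j => c j • AuxDisc.Nbar G, b) := by
    intro c b
    apply e.injective
    rw [he g, e.apply_symm_apply]
    apply Prod.ext
    · funext j
      show MonoidAlgebra.of ℤ G g * (c j • AuxDisc.Nbar G) = c j • AuxDisc.Nbar G
      rw [mul_smul_comm, MonoidAlgebra.of_apply, AuxDisc.mul_Nbar]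
    · rfl

  -- Claim A : every dual vector is (1/p) N(z) for some z
  have claimA : ∀ y : (fixedSubmodule (H := H) g) ⊗[ℤ] ℚ, y ∈ dualFixed B g →
      ∃ z : H, (p:ℤ) • y
        = (⟨∑ i ∈ Finset.range p, g ^ i • z, hNfix z⟩ : fixedSubmodule (H := H) g) ⊗ₜ[ℤ] (1:ℚ) := by
    intro y hy
    have hy' : ∀ x : fixedSubmodule (H := H) g, ∃ m : ℤ, pairQ B g x y = m := hy
    choose φ hφ using hy'
    have hφadd : ∀ x x', φ (x + x') = φ x + φ x' := by
      intro x x'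
      have h1 : ((φ (x + x') : ℤ) : ℚ) = ((φ x + φ x' : ℤ) : ℚ) := by
        rw [← hφ (x + x'), hpair_addx, hφ x, hφ x']
        push_cast; ring
      exact_mod_cast h1
    set π : H → H := fun x => e.symm (fun j => ((e x).1 j |>.coeff 1) • AuxDisc.Nbar G, (e x).2) with hπ
    have hπfix : ∀ x : H, g • π x = π x := fun x => hLmem _ _
    have hπL : ∀ w : H, g • w = w → π w = w := by
      intro w hw
      rw [hπ]
      show e.symm (fun j => ((e w).1 j |>.coeff 1) • AuxDisc.Nbar G, (e w).2) = w
      rw [AddEquiv.symm_apply_eq]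
      apply Prod.ext
      · funext j; exact (hLchar w hw j).symm
      · rfl
    have hπadd : ∀ x x', π (x + x') = π x + π x' := by
      intro x x'
      show e.symm _ = e.symm _ + e.symm _
      rw [← map_add e.symm]
      congr 1
      apply Prod.ext
      · funext j
        show ((e (x + x')).1 j |>.coeff 1) • AuxDisc.Nbar G
            = ((e x).1 j |>.coeff 1) • AuxDisc.Nbar G + ((e x').1 j |>.coeff 1) • AuxDisc.Nbar G
        rw [map_add e, ← add_smul]
        rfl
      · show (e (x + x')).2 = (e x).2 + (e x').2
        rw [map_add]; rfl
    set ψ : H →ₗ[ℤ] ℤ :=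
      (AddMonoidHom.mk' (fun x => φ ⟨π x, hπfix x⟩)
        (by
          intro a b
          have hsub : (⟨π (a + b), hπfix (a + b)⟩ : fixedSubmodule (H := H) g)
              = ⟨π a, hπfix a⟩ + ⟨π b, hπfix b⟩ := Subtype.ext (hπadd a b)
          show φ ⟨π (a + b), hπfix (a + b)⟩ = φ ⟨π a, hπfix a⟩ + φ ⟨π b, hπfix b⟩
          rw [hsub]
          exact hφadd _ _)).toIntLinearMap with hψ
    obtain ⟨z, hz⟩ := hunimod.2 ψ
    have hBz : ∀ x : fixedSubmodule (H := H) g, B z x.1 = φ x := by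
      intro x
      have h1 : B z x.1 = ψ x.1 := by rw [show (B z) = ψ from hz]
      rw [h1]
      show φ ⟨π x.1, hπfix x.1⟩ = φ x
      congr 1
      exact Subtype.ext (hπL x.1 x.2)
    obtain ⟨w, m, hm, hw⟩ := hdenom y
    have hm0 : (m:ℤ) ≠ 0 := Int.natCast_ne_zero.mpr hm.ne'
    set Nz : fixedSubmodule (H := H) g := ⟨∑ i ∈ Finset.range p, g ^ i • z, hNfix z⟩ with hNz
    have hw'B : ∀ x : H, g • x = x → B ((p:ℤ) • (w:H) - (m:ℤ) • (Nz:H)) x = 0 := by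
      intro x hx
      have hBwx : B (w:H) x = m * φ ⟨x, hx⟩ := by
        have h1 := congrArg (pairQ B g ⟨x, hx⟩) hw
        rw [map_zsmul, hφ ⟨x, hx⟩, hpair_tmul, mul_one] at h1
        have h2 : ((m:ℤ) * φ ⟨x, hx⟩ : ℤ) = ((B (w:H) x : ℤ) : ℚ) := by
          rw [← h1, zsmul_eq_mul]; push_cast; ring
        exact_mod_cast h2.symm
      have hBNzx : B (Nz:H) x = p * B z x := hBNl z x hx
      rw [map_sub, map_smul, map_smul, LinearMap.sub_apply, LinearMap.smul_apply,
        LinearMap.smul_apply, hBwx, hBNzx, hBz ⟨x, hx⟩]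
      simp only [smul_eq_mul]
      ring
    have hw'0 : ((p:ℤ) • w - (m:ℤ) • Nz : fixedSubmodule (H := H) g) = 0 := by
      apply Subtype.ext
      show ((p:ℤ) • w - (m:ℤ) • Nz : fixedSubmodule (H := H) g).1 = (0:H)
      have hcoe : (((p:ℤ) • w - (m:ℤ) • Nz : fixedSubmodule (H := H) g) : H)
          = (p:ℤ) • (w:H) - (m:ℤ) • (Nz:H) := rfl
      rw [hcoe]
      refine horth _ ?_ (fun x hx => hw'B x hx)
      have := ((p:ℤ) • w - (m:ℤ) • Nz : fixedSubmodule (H := H) g).2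
      rw [hcoe] at this
      exact this
    have hpwNz : (p:ℤ) • w = (m:ℤ) • Nz := sub_eq_zero.mp hw'0
    have h2 : (m:ℤ) • ((p:ℤ) • y) = (m:ℤ) • (Nz ⊗ₜ[ℤ] (1:ℚ)) := by
      rw [smul_comm, hw, TensorProduct.smul_tmul', TensorProduct.smul_tmul', hpwNz]
    exact ⟨z, hdiv m hm0 _ _ h2⟩

  have hp0' : (p:ℤ) ≠ 0 := hp0
  have : Fact p.Prime := ⟨hp⟩
  -- well-definedness of the augmentation coordinates
  have hwd : ∀ z z' : H, (∑ i ∈ Finset.range p, g ^ i • z) = (∑ i ∈ Finset.range p, g ^ i • z')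
      → ∀ j, AuxDisc.eps G ((e z).1 j) = AuxDisc.eps G ((e z').1 j) := by
    intro z z' hzz j
    have h0 : ((fun j => AuxDisc.eps G ((e z).1 j) • AuxDisc.Nbar G, p • (e z).2)
        : (Fin ν → MonoidAlgebra ℤ G) × (Fin μ → ℤ))
        = (fun j => AuxDisc.eps G ((e z').1 j) • AuxDisc.Nbar G, p • (e z').2) := by
      rw [← hNe z, ← hNe z', hzz]
    have h1 := congrArg (fun v => v.1 j) h0
    simp only at h1
    have h2 := congrArg (AuxDisc.eps G) h1
    rw [map_zsmul, map_zsmul, AuxDisc.eps_Nbar] at h2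
    have hpz : (Fintype.card G : ℤ) ≠ 0 := by rw [hcardF]; exact hp0
    simp only [smul_eq_mul] at h2
    exact mul_right_cancel₀ hpz h2
  have hepsadd : ∀ (a b : H) (j : Fin ν),
      AuxDisc.eps G ((e (a + b)).1 j)
        = AuxDisc.eps G ((e a).1 j) + AuxDisc.eps G ((e b).1 j) := by
    intro a b j
    rw [map_add e]
    show AuxDisc.eps G (((e a) + (e b)).1 j) = _
    rw [Prod.fst_add, Pi.add_apply, map_add]
  have hNadd : ∀ z z' : H, (∑ i ∈ Finset.range p, g ^ i • (z + z'))
      = (∑ i ∈ Finset.range p, g ^ i • z) + (∑ i ∈ Finset.range p, g ^ i • z') := by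
    intro z z'
    rw [← Finset.sum_add_distrib]
    exact Finset.sum_congr rfl (fun i _ => smul_add _ _ _)
  refine ⟨part1, ?_, ?_⟩
  · intro y hy
    obtain ⟨z, hz⟩ := claimA y hy
    refine ⟨⟨∑ i ∈ Finset.range p, g ^ i • z, hNfix z⟩, ?_⟩
    show (⟨∑ i ∈ Finset.range p, g ^ i • z, hNfix z⟩ : fixedSubmodule (H := H) g) ⊗ₜ[ℤ] (1:ℚ)
      = p • y
    rw [← natCast_zsmul y p]
    exact hz.symm
  · -- the quotient isomorphism
    choose zc hzc using (fun y : (dualFixed B g) => claimA y.1 y.2)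
    set f : (dualFixed B g) → (Fin ν → ZMod p) :=
      fun y j => ((AuxDisc.eps G ((e (zc y)).1 j) : ℤ) : ZMod p) with hf
    have hfadd : ∀ y y' : (dualFixed B g), f (y + y') = f y + f y' := by
      intro y y'
      have h2 : (⟨∑ i ∈ Finset.range p, g ^ i • zc (y + y'), hNfix _⟩
            : fixedSubmodule (H := H) g) ⊗ₜ[ℤ] (1:ℚ)
          = (⟨∑ i ∈ Finset.range p, g ^ i • (zc y + zc y'), hNfix _⟩
            : fixedSubmodule (H := H) g) ⊗ₜ[ℤ] (1:ℚ) := by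
        rw [← hzc (y + y')]
        have hco : ((y + y' : dualFixed B g) : (fixedSubmodule (H := H) g) ⊗[ℤ] ℚ)
            = (y : _) + (y' : _) := rfl
        rw [hco, smul_add, hzc y, hzc y', ← TensorProduct.add_tmul]
        congr 1
        exact Subtype.ext (hNadd (zc y) (zc y')).symm
      have h3 := congrArg Subtype.val (hinj1 _ _ h2)
      have h4 := hwd _ _ h3
      funext j
      show ((AuxDisc.eps G ((e (zc (y + y'))).1 j) : ℤ) : ZMod p)
        = ((AuxDisc.eps G ((e (zc y)).1 j) : ℤ) : ZMod p)
          + ((AuxDisc.eps G ((e (zc y')).1 j) : ℤ) : ZMod p)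
      rw [h4 j, hepsadd]
      push_cast
      ring
    have hsurj : Function.Surjective (AddMonoidHom.mk' f hfadd) := by
      intro c
      set z : H := e.symm (fun j => MonoidAlgebra.single 1 (((c j).val : ℕ) : ℤ), 0) with hzdef
      set Nz : fixedSubmodule (H := H) g :=
        ⟨∑ i ∈ Finset.range p, g ^ i • z, hNfix z⟩ with hNzdef
      have hymem : (Nz ⊗ₜ[ℤ] ((p:ℚ)⁻¹)) ∈ dualFixed B g := by
        show ∀ x : fixedSubmodule (H := H) g, ∃ m : ℤ,
          pairQ B g x (Nz ⊗ₜ[ℤ] ((p:ℚ)⁻¹)) = m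
        intro x
        refine ⟨B z x.1, ?_⟩
        rw [hpair_tmul]
        have h5 : B (Nz:H) x.1 = p * B z x.1 := hBNl z x.1 x.2
        rw [h5]
        push_cast
        rw [mul_comm ((p:ℚ)) _, mul_assoc]
        rw [mul_inv_cancel₀ (by exact_mod_cast hp.ne_zero : (p:ℚ) ≠ 0), mul_one]
      set y : dualFixed B g := ⟨Nz ⊗ₜ[ℤ] ((p:ℚ)⁻¹), hymem⟩ with hydef
      have hpy : (p:ℤ) • (y : (fixedSubmodule (H := H) g) ⊗[ℤ] ℚ) = Nz ⊗ₜ[ℤ] (1:ℚ) := by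
        have h9 := ((TensorProduct.mk ℤ (fixedSubmodule (H := H) g) ℚ Nz).map_smul
          (p:ℤ) ((p:ℚ)⁻¹)).symm
        have h10 : (p:ℤ) • ((p:ℚ)⁻¹) = (1:ℚ) := by
          rw [zsmul_eq_mul]
          push_cast
          rw [mul_inv_cancel₀ (by exact_mod_cast hp.ne_zero : (p:ℚ) ≠ 0)]
        calc (p:ℤ) • (Nz ⊗ₜ[ℤ] ((p:ℚ)⁻¹)) = Nz ⊗ₜ[ℤ] ((p:ℤ) • ((p:ℚ)⁻¹)) := h9
          _ = Nz ⊗ₜ[ℤ] (1:ℚ) := by rw [h10]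
      refine ⟨y, ?_⟩
      have h11 : (∑ i ∈ Finset.range p, g ^ i • (zc y)) = ∑ i ∈ Finset.range p, g ^ i • z := by
        have h12 := (hzc y).symm.trans hpy
        exact congrArg Subtype.val (hinj1 _ _ h12)
      funext j
      show ((AuxDisc.eps G ((e (zc y)).1 j) : ℤ) : ZMod p) = c j
      rw [hwd _ _ h11 j]
      have h13 : (e z).1 j = MonoidAlgebra.single 1 (((c j).val : ℕ) : ℤ) := by
        rw [hzdef, e.apply_symm_apply]
      rw [h13]
      have h14 : AuxDisc.eps G (MonoidAlgebra.single (1:G) (((c j).val : ℕ) : ℤ))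
          = (((c j).val : ℕ) : ℤ) := AuxDisc.eps_single 1 _
      rw [h14]
      push_cast
      exact ZMod.natCast_rightInverse (c j)
    have hker : (AddMonoidHom.mk' f hfadd).ker
        = ((latticeInQ (H := H) g).range.addSubgroupOf (dualFixed B g)) := by
      ext y
      simp only [AddMonoidHom.mem_ker, AddSubgroup.mem_addSubgroupOf, AddMonoidHom.mem_range]
      constructor
      · intro h0
        have hdvd : ∀ j, ∃ b : ℤ, AuxDisc.eps G ((e (zc y)).1 j) = p * b := by
          intro j
          have h1 : ((AuxDisc.eps G ((e (zc y)).1 j) : ℤ) : ZMod p) = 0 := congrFun h0 j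
          obtain ⟨b, hb⟩ := (ZMod.intCast_zmod_eq_zero_iff_dvd _ p).mp h1
          exact ⟨b, hb⟩
        choose bb hbb using hdvd
        set w : H := e.symm (fun j => bb j • AuxDisc.Nbar G, (e (zc y)).2) with hwdef
        have hwfix : g • w = w := hLmem _ _
        have hNzw : (∑ i ∈ Finset.range p, g ^ i • (zc y)) = (p:ℤ) • w := by
          apply e.injective
          rw [hNe (zc y), map_zsmul, hwdef, e.apply_symm_apply]
          apply Prod.ext
          · funext j
            show AuxDisc.eps G ((e (zc y)).1 j) • AuxDisc.Nbar G
              = (p:ℤ) • (bb j • AuxDisc.Nbar G)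
            rw [hbb j, smul_smul]
          · show p • (e (zc y)).2 = (p:ℤ) • (e (zc y)).2
            rw [natCast_zsmul]
        refine ⟨⟨w, hwfix⟩, ?_⟩
        show (⟨w, hwfix⟩ : fixedSubmodule (H := H) g) ⊗ₜ[ℤ] (1:ℚ) = (y : _)
        apply hdiv (p:ℤ) hp0'
        rw [hzc y]
        rw [TensorProduct.smul_tmul']
        congr 1
        exact Subtype.ext hNzw.symm
      · rintro ⟨w, hwq⟩
        have hwq' : w ⊗ₜ[ℤ] (1:ℚ) = (y : (fixedSubmodule (H := H) g) ⊗[ℤ] ℚ) := hwq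
        have h10 : (⟨∑ i ∈ Finset.range p, g ^ i • (zc y), hNfix _⟩
            : fixedSubmodule (H := H) g) = (p:ℤ) • w := by
          apply hinj1
          rw [← hzc y, ← hwq', ← TensorProduct.smul_tmul']
        have h11 : (∑ i ∈ Finset.range p, g ^ i • (zc y)) = (p:ℤ) • (w:H) :=
          congrArg Subtype.val h10
        funext j
        show ((AuxDisc.eps G ((e (zc y)).1 j) : ℤ) : ZMod p) = 0
        have h12 := congrArg (fun v => v.1 j) ((hNe (zc y)).symm.trans
          (by rw [h11, map_zsmul] : e (∑ i ∈ Finset.range p, g ^ i • (zc y))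
            = (p:ℤ) • e (w:H)))
        simp only at h12
        have h13 : (e (w:H)).1 j = (((e (w:H)).1 j).coeff 1) • AuxDisc.Nbar G := hLchar (w:H) w.2 j
        have h14 : ((p:ℤ) • e ((w:H))).1 j = ((p:ℤ) * (((e (w:H)).1 j).coeff 1)) • AuxDisc.Nbar G := by
          show (p:ℤ) • ((e (w:H)).1 j) = _
          conv_lhs => rw [h13]
          rw [smul_smul]
        rw [h14] at h12
        have h15 := congrArg (AuxDisc.eps G) h12
        rw [map_zsmul, map_zsmul, AuxDisc.eps_Nbar, hcardF] at h15
        simp only [smul_eq_mul] at h15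
        have h16 : AuxDisc.eps G ((e (zc y)).1 j) = (p:ℤ) * (((e (w:H)).1 j).coeff 1) :=
          mul_right_cancel₀ hp0 h15
        rw [h16]
        apply (ZMod.intCast_zmod_eq_zero_iff_dvd _ p).mpr
        exact Dvd.intro _ rfl
    exact ⟨(QuotientAddGroup.quotientAddEquivOfEq hker.symm).trans
      (QuotientAddGroup.quotientKerEquivOfSurjective _ hsurj)⟩
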